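/- Fix ε > 0 and T > 0. For an instance of unrelated scheduling with K uniform machine types, let s^{(t)}_max denote the maximum speed among machines of type t, and assume 0 < p_{t,j} ≤ T·s^{(t)}_max for all t, j. Define rounded sizes p̄_{t,j} = ε²T·s^{(t)}_max·(1+ε)^{⌈log_{1+ε}(p_{t,j}/(ε²T·s^{(t)}_max))⌉} and rounded speeds s̄_i = s^{(t_i)}_max/(1+ε)^{⌈log_{1+ε}(s^{(t_i)}_max/s_i)⌉}. Then: (i) every schedule with makespan at most T with respect to (p, s) has makespan at most (1+ε)²·T with respect to (p̄, s̄); and (ii) for every schedule, the makespan with respect to (p, s) is at most the makespan with respect to (p̄, s̄). -/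

import Mathlib

open Finset
open scoped Classical

lemma ceil_zpow_bounds {b x : ℝ} (hb : 1 < b) (hx : 0 < x) :
    x ≤ b ^ ⌈Real.logb b x⌉ ∧ (b : ℝ) ^ ⌈Real.logb b x⌉ ≤ b * x := by
  have hb0 : 0 < b := lt_trans one_pos hb
  have hb1 : b ≠ 1 := ne_of_gt hb
  have hlog : b ^ (Real.logb b x) = x := Real.rpow_logb hb0 hb1 hx
  have hz : (b : ℝ) ^ (⌈Real.logb b x⌉ : ℤ) = b ^ ((⌈Real.logb b x⌉ : ℤ) : ℝ) :=
    (Real.rpow_intCast b _).symm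
  constructor
  · rw [hz]
    calc x = b ^ (Real.logb b x) := hlog.symm
      _ ≤ b ^ ((⌈Real.logb b x⌉ : ℤ) : ℝ) :=
        Real.rpow_le_rpow_of_exponent_le hb.le (Int.le_ceil _)
  · rw [hz]
    calc b ^ ((⌈Real.logb b x⌉ : ℤ) : ℝ) ≤ b ^ (Real.logb b x + 1) :=
        Real.rpow_le_rpow_of_exponent_le hb.le (le_of_lt (Int.ceil_lt_add_one _))
      _ = b * x := by rw [Real.rpow_add hb0, hlog, Real.rpow_one]; ring

/-- Geometric rounding of job sizes and machine speeds for unrelated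
scheduling with uniform machine types. -/
theorem uniform_types_rounding {J M : Type*} [Fintype J] [Fintype M]
    {K : ℕ} (mt : M → Fin K) (s : M → ℝ) (hs : ∀ i, 0 < s i)
    (ε T : ℝ) (hε : 0 < ε) (hT : 0 < T)
    (smax : Fin K → ℝ)
    (hsmax_le : ∀ i, s i ≤ smax (mt i))
    (hsmax_mem : ∀ t, ∃ i, mt i = t ∧ s i = smax t)
    (p : Fin K → J → ℝ) (hp : ∀ t j, 0 < p t j ∧ p t j ≤ T * smax t)
    (pbar : Fin K → J → ℝ) (sbar : M → ℝ)
    (hpbar : ∀ t j, pbar t j = ε ^ 2 * T * smax t *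
      (1 + ε) ^ ⌈Real.logb (1 + ε) (p t j / (ε ^ 2 * T * smax t))⌉)
    (hsbar : ∀ i, sbar i =
      smax (mt i) / (1 + ε) ^ ⌈Real.logb (1 + ε) (smax (mt i) / s i)⌉) :
    (∀ σ : J → M,
      (⨆ i, ∑ j ∈ univ.filter (fun j => σ j = i), p (mt i) j / s i) ≤ T →
      (⨆ i, ∑ j ∈ univ.filter (fun j => σ j = i), pbar (mt i) j / sbar i) ≤
        (1 + ε) ^ 2 * T) ∧
    (∀ σ : J → M,
      (⨆ i, ∑ j ∈ univ.filter (fun j => σ j = i), p (mt i) j / s i) ≤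
        ⨆ i, ∑ j ∈ univ.filter (fun j => σ j = i), pbar (mt i) j / sbar i) := by
  have hb : (1 : ℝ) < 1 + ε := by linarith
  have hb0 : (0 : ℝ) < 1 + ε := by linarith
  have hsm : ∀ t, 0 < smax t := by
    intro t
    obtain ⟨i, hi, hsi⟩ := hsmax_mem t
    exact hsi ▸ hs i
  -- bounds on pbar
  have hpb : ∀ t j, p t j ≤ pbar t j ∧ pbar t j ≤ (1 + ε) * p t j := by
    intro t j
    have hc : 0 < ε ^ 2 * T * smax t := mul_pos (mul_pos (pow_pos hε 2) hT) (hsm t)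
    have hx : 0 < p t j / (ε ^ 2 * T * smax t) := div_pos (hp t j).1 hc
    obtain ⟨h1, h2⟩ := ceil_zpow_bounds hb hx
    rw [hpbar]
    constructor
    · calc p t j = ε ^ 2 * T * smax t * (p t j / (ε ^ 2 * T * smax t)) := by
            field_simp [(hsm t).ne']
        _ ≤ _ := by
            exact mul_le_mul_of_nonneg_left h1 hc.le
    · calc ε ^ 2 * T * smax t * (1 + ε) ^ ⌈Real.logb (1 + ε) (p t j / (ε ^ 2 * T * smax t))⌉
          ≤ ε ^ 2 * T * smax t * ((1 + ε) * (p t j / (ε ^ 2 * T * smax t))) :=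
            mul_le_mul_of_nonneg_left h2 hc.le
        _ = (1 + ε) * p t j := by field_simp [(hsm t).ne']
  -- bounds on sbar
  have hsb : ∀ i, s i / (1 + ε) ≤ sbar i ∧ sbar i ≤ s i := by
    intro i
    have hsi := hs i
    have hsmi := hsm (mt i)
    have hx : 0 < smax (mt i) / s i := div_pos hsmi hsi
    obtain ⟨h1, h2⟩ := ceil_zpow_bounds hb hx
    have hzp : (0 : ℝ) < (1 + ε) ^ ⌈Real.logb (1 + ε) (smax (mt i) / s i)⌉ :=
      zpow_pos hb0 _
    rw [hsbar]
    constructor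
    · rw [div_le_div_iff₀ hb0 hzp]
      have := mul_le_mul_of_nonneg_left h2 hsi.le
      calc s i * (1 + ε) ^ ⌈Real.logb (1 + ε) (smax (mt i) / s i)⌉
          ≤ s i * ((1 + ε) * (smax (mt i) / s i)) := this
        _ = smax (mt i) * (1 + ε) := by field_simp
    · rw [div_le_iff₀ hzp]
      have := mul_le_mul_of_nonneg_left h1 hsi.le
      calc smax (mt i) = s i * (smax (mt i) / s i) := by field_simp
        _ ≤ s i * (1 + ε) ^ ⌈Real.logb (1 + ε) (smax (mt i) / s i)⌉ := this
  have hsb0 : ∀ i, 0 < sbar i := fun i =>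
    lt_of_lt_of_le (div_pos (hs i) hb0) (hsb i).1
  -- pointwise ratio bounds
  have hratio1 : ∀ (i : M) (j : J),
      pbar (mt i) j / sbar i ≤ (1 + ε) ^ 2 * (p (mt i) j / s i) := by
    intro i j
    have h1 : pbar (mt i) j / sbar i ≤ ((1 + ε) * p (mt i) j) / (s i / (1 + ε)) :=
      div_le_div₀ (mul_pos hb0 (hp (mt i) j).1).le
        (hpb (mt i) j).2 (div_pos (hs i) hb0) (hsb i).1
    refine h1.trans (le_of_eq ?_)
    have := (hs i).ne'
    field_simp
  have hratio2 : ∀ (i : M) (j : J),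
      p (mt i) j / s i ≤ pbar (mt i) j / sbar i := fun i j =>
    div_le_div₀ ((hp (mt i) j).1.trans_le (hpb (mt i) j).1).le
      (hpb (mt i) j).1 (hsb0 i) (hsb i).2
  constructor
  · intro σ hσ
    have hbdd : BddAbove (Set.range fun i =>
        ∑ j ∈ univ.filter (fun j => σ j = i), p (mt i) j / s i) :=
      Set.Finite.bddAbove (Set.finite_range _)
    refine Real.iSup_le (fun i => ?_) (by positivity)
    have hload : (∑ j ∈ univ.filter (fun j => σ j = i), pbar (mt i) j / sbar i)
        ≤ (1 + ε) ^ 2 * ∑ j ∈ univ.filter (fun j => σ j = i), p (mt i) j / s i := by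
      rw [mul_sum]
      exact sum_le_sum fun j _ => hratio1 i j
    have hle : (∑ j ∈ univ.filter (fun j => σ j = i), p (mt i) j / s i) ≤ T :=
      le_trans (le_ciSup hbdd i) hσ
    calc (∑ j ∈ univ.filter (fun j => σ j = i), pbar (mt i) j / sbar i)
        ≤ (1 + ε) ^ 2 * ∑ j ∈ univ.filter (fun j => σ j = i), p (mt i) j / s i := hload
      _ ≤ (1 + ε) ^ 2 * T := by nlinarith
  · intro σ
    cases isEmpty_or_nonempty M with
    | inl h =>
      simp [iSup_of_empty', Real.sSup_empty]
    | inr h =>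
      refine ciSup_le fun i => ?_
      refine le_trans ?_ (le_ciSup (Set.Finite.bddAbove (Set.finite_range _)) i)
      exact sum_le_sum fun j _ => hratio2 i j
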